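/- Suppose n - d is even with 1 ≤ d ≤ n and gcd(s,n) = 1. Every nonzero element of S_{n,d,s} = { b_0 x + Σ_{i=1}^{(n-d)/2} ( b_i x^{q^{si}} + (b_i x)^{q^{s(n-i)}} ) : b_i ∈ F_{q^n} } has rank at least d as an F_q-linear endomorphism of F_{q^n}; hence S_{n,d,s} is an F_q-linear d-code of size q^{n(n-d+2)/2}. -/

import Mathlib

open Finset FiniteField LinearMap Module
set_option linter.unusedSectionVars false
set_option maxHeartbeats 1600000

section Schmidt

variable {K F : Type} [Field K] [Fintype K] [Field F] [Fintype F] [Algebra K F]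

private lemma schER : ∃ p e : ℕ, p.Prime ∧ 0 < e ∧ Fintype.card K = p ^ e ∧ CharP F p := by
  obtain ⟨p, hc⟩ := CharP.exists K
  obtain ⟨e, hp, hcard⟩ := @FiniteField.card K _ _ p hc
  haveI := hc
  exact ⟨p, e, hp, e.2, hcard, charP_of_injective_algebraMap (algebraMap K F).injective p⟩

private lemma sch_add_pow (t : ℕ) (x y : F) :
    (x + y) ^ (Fintype.card K) ^ t = x ^ (Fintype.card K) ^ t + y ^ (Fintype.card K) ^ t := by
  obtain ⟨p, e, hp, he, hcard, hch⟩ := @schER K F _ _ _ _ _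
  haveI := hch; haveI : Fact p.Prime := ⟨hp⟩
  rw [hcard, ← pow_mul]
  exact add_pow_char_pow x y p (e*t)

private lemma sch_sub_pow (t : ℕ) (x y : F) :
    (x - y) ^ (Fintype.card K) ^ t = x ^ (Fintype.card K) ^ t - y ^ (Fintype.card K) ^ t := by
  obtain ⟨p, e, hp, he, hcard, hch⟩ := @schER K F _ _ _ _ _
  haveI := hch; haveI : Fact p.Prime := ⟨hp⟩
  rw [hcard, ← pow_mul]
  exact sub_pow_char_pow x y (e*t)

private lemma sch_pow_inj (t : ℕ) {x y : F}
    (h : x ^ (Fintype.card K) ^ t = y ^ (Fintype.card K) ^ t) : x = y := by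
  have hs := sch_sub_pow (K := K) t x y
  rw [h, sub_self] at hs
  have h0 : x - y = 0 :=
    pow_eq_zero_iff (n := (Fintype.card K) ^ t) (pow_ne_zero _ Fintype.card_ne_zero) |>.mp hs
  exact sub_eq_zero.mp h0

private lemma sch_alg_pow (t : ℕ) (k : K) :
    (algebraMap K F k) ^ (Fintype.card K) ^ t = algebraMap K F k := by
  rw [← map_pow, FiniteField.pow_card_pow]

/-- The linearized polynomial map. -/
def SmL (s : ℕ) (c : ℕ → F) (N : ℕ) : F →ₗ[K] F where
  toFun := fun x => ∑ j ∈ Finset.range N, c j * x ^ (Fintype.card K) ^ (s * j)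
  map_add' := by
    intro x y
    rw [← Finset.sum_add_distrib]
    refine Finset.sum_congr rfl fun j _ => ?_
    rw [sch_add_pow (K := K), mul_add]
  map_smul' := by
    intro k x
    simp only [Algebra.smul_def, RingHom.id_apply, Finset.mul_sum]
    refine Finset.sum_congr rfl fun j _ => ?_
    rw [mul_pow, sch_alg_pow (K := K)]
    ring

lemma SmL_apply (s : ℕ) (c : ℕ → F) (N : ℕ) (x : F) :
    SmL (K := K) s c N x = ∑ j ∈ Finset.range N, c j * x ^ (Fintype.card K) ^ (s * j) := rfl
private lemma sch_iter {x : F} {t : ℕ} (h : x ^ (Fintype.card K) ^ t = x) (a : ℕ) :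
    x ^ (Fintype.card K) ^ (t * a) = x := by
  induction a with
  | zero => simp
  | succ a ih =>
    have : (Fintype.card K) ^ (t * (a+1)) = (Fintype.card K) ^ (t*a) * (Fintype.card K)^t := by
      rw [← pow_add]; ring_nf
    rw [this, pow_mul, ih, h]

private lemma sch_fix {n s : ℕ} (hn : 0 < n) (hs : Nat.gcd s n = 1)
    (hF : Fintype.card F = (Fintype.card K) ^ n) (x : F)
    (h : x ^ (Fintype.card K) ^ s = x) : ∃ k : K, algebraMap K F k = x := by
  set Q := Fintype.card K with hQdef
  have hQ2 : 1 < Q := Fintype.one_lt_card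
  have hxn : x ^ Q ^ n = x := by rw [← hF]; exact FiniteField.pow_card x
  -- Step: x ^ Q = x
  have hx1 : x ^ Q ^ 1 = x := by
    rcases eq_or_lt_of_le (show 1 ≤ n from hn) with h1 | h1
    · rw [← h1] at hxn; exact hxn
    · obtain ⟨a, -, ha⟩ := Nat.exists_mul_mod_eq_one_of_coprime hs h1
      have hsa : x ^ Q ^ (s * a) = x := sch_iter h a
      have hdm : s * a = n * (s * a / n) + 1 := by
        conv_lhs => rw [← Nat.div_add_mod (s*a) n]
        rw [ha]
      rw [hdm, pow_add, pow_mul] at hsa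
      rwa [sch_iter hxn (s*a/n)] at hsa
  rw [pow_one] at hx1
  -- counting
  classical
  set P : Polynomial F := Polynomial.X ^ Q - Polynomial.X with hPdef
  have hdeg : P.natDegree = Q := by
    rw [hPdef, Polynomial.natDegree_sub_eq_left_of_natDegree_lt] <;>
      simp [Polynomial.natDegree_X_pow, Polynomial.natDegree_X, hQ2]
  have hP0 : P ≠ 0 := fun hP => by simp [hP] at hdeg; omega
  have hroot : ∀ y : F, y ^ Q = y → y ∈ P.roots.toFinset := by
    intro y hy
    rw [Multiset.mem_toFinset, Polynomial.mem_roots hP0]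
    simp [hPdef, Polynomial.IsRoot, hy]
  have hsub : Finset.univ.image (algebraMap K F) ⊆ P.roots.toFinset := by
    intro y hy
    obtain ⟨k, -, rfl⟩ := Finset.mem_image.mp hy
    exact hroot _ (by rw [← map_pow, FiniteField.pow_card])
  have hcard : P.roots.toFinset.card ≤ (Finset.univ.image (algebraMap K F)).card := by
    rw [Finset.card_image_of_injective _ (algebraMap K F).injective, Finset.card_univ]
    exact le_trans (Multiset.toFinset_card_le _) (le_trans (Polynomial.card_roots' P) hdeg.le)
  have := Finset.eq_of_subset_of_card_le hsub hcard
  have hx : x ∈ Finset.univ.image (algebraMap K F) := by rw [this]; exact hroot x hx1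
  obtain ⟨k, -, hk⟩ := Finset.mem_image.mp hx
  exact ⟨k, hk⟩

private lemma sch_ker_comp (f g : F →ₗ[K] F) :
    finrank K (LinearMap.ker (f ∘ₗ g)) ≤ finrank K (LinearMap.ker f) + finrank K (LinearMap.ker g) := by
  have hmap : ∀ x ∈ LinearMap.ker (f ∘ₗ g), g x ∈ LinearMap.ker f := fun x hx => by
    simpa [LinearMap.mem_ker] using hx
  set g' := g.restrict hmap with hg'
  have h1 := LinearMap.finrank_range_add_finrank_ker g'
  have h2 : finrank K (LinearMap.range g') ≤ finrank K (LinearMap.ker f) := Submodule.finrank_le _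
  have h3 : finrank K (LinearMap.ker g') ≤ finrank K (LinearMap.ker g) := by
    have hcod : ∀ x : (LinearMap.ker g'), ((x : (LinearMap.ker (f ∘ₗ g))) : F) ∈ LinearMap.ker g := by
      intro x
      have hx := x.2
      rw [LinearMap.mem_ker] at hx ⊢
      exact Subtype.ext_iff.mp hx
    set e : (LinearMap.ker g') →ₗ[K] (LinearMap.ker g) :=
      LinearMap.codRestrict (LinearMap.ker g)
        ((LinearMap.ker (f ∘ₗ g)).subtype.comp (LinearMap.ker g').subtype) (fun x => hcod x) with he
    have hinj : Function.Injective e := by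
      intro a b hab
      have : ((a : (LinearMap.ker (f ∘ₗ g))) : F) = ((b : (LinearMap.ker (f ∘ₗ g))) : F) := by
        have := congrArg Subtype.val hab
        exact this
      exact Subtype.ext (Subtype.ext this)
    exact LinearMap.finrank_le_finrank_of_injective hinj
  omega

private lemma sch_ker_bound {n s : ℕ} (hn : 0 < n) (hs : Nat.gcd s n = 1)
    (hF : Fintype.card F = (Fintype.card K) ^ n) :
    ∀ (k : ℕ) (c : ℕ → F), (∃ j, j ≤ k ∧ c j ≠ 0) →
      finrank K (LinearMap.ker (SmL (K := K) s c (k+1))) ≤ k := by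
  set Q := Fintype.card K with hQdef
  intro k
  induction k with
  | zero =>
    intro c hc
    obtain ⟨j, hj, hcj⟩ := hc
    interval_cases j
    have : LinearMap.ker (SmL (K := K) s c 1) = ⊥ := by
      rw [LinearMap.ker_eq_bot']
      intro x hx
      rw [SmL_apply, Finset.sum_range_one, Nat.mul_zero, pow_zero, pow_one] at hx
      exact (mul_eq_zero.mp hx).resolve_left hcj
    rw [this, finrank_bot]
  | succ k ih =>
    intro c hc
    by_cases hker : LinearMap.ker (SmL (K := K) s c (k+2)) = ⊥
    · rw [hker, finrank_bot]; omega
    obtain ⟨u, hu, hu0⟩ := Submodule.exists_mem_ne_zero_of_ne_bot hker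
    rw [LinearMap.mem_ker] at hu
    set a : F := u ^ Q ^ s * u⁻¹ with ha
    have ha0 : a ≠ 0 := mul_ne_zero (pow_ne_zero _ hu0) (inv_ne_zero hu0)
    set g : F →ₗ[K] F := SmL (K := K) s (fun j => if j = 0 then -a else 1) 2 with hgdef
    have hg : ∀ x : F, g x = x ^ Q ^ s - a * x := by
      intro x
      rw [hgdef, SmL_apply, Finset.sum_range_succ, Finset.sum_range_one]
      simp [Nat.mul_zero, Nat.mul_one]
      ring
    have hgu : g u = 0 := by
      rw [hg, ha]
      field_simp
      ring
    -- the ker of g has finrank ≤ 1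
    have hkerg : finrank K (LinearMap.ker g) ≤ 1 := by
      by_cases hgb : LinearMap.ker g = ⊥
      · rw [hgb, finrank_bot]; omega
      obtain ⟨v, hv, hv0⟩ := Submodule.exists_mem_ne_zero_of_ne_bot hgb
      rw [LinearMap.mem_ker, hg, sub_eq_zero] at hv
      have hle : LinearMap.ker g ≤ Submodule.span K {v} := by
        intro w hw
        rw [LinearMap.mem_ker, hg, sub_eq_zero] at hw
        have hfix1 : (w * v⁻¹) ^ Q ^ s = w * v⁻¹ := by
          rw [mul_pow, inv_pow, hw, hv, mul_inv, ha]
          field_simp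
        obtain ⟨kk, hkk⟩ := sch_fix hn hs hF _ hfix1
        have : w = kk • v := by
          rw [Algebra.smul_def, hkk]
          field_simp
        rw [this]
        exact Submodule.smul_mem _ _ (Submodule.mem_span_singleton_self v)
      calc finrank K (LinearMap.ker g) ≤ finrank K (Submodule.span K {v}) :=
            Submodule.finrank_mono hle
        _ = 1 := finrank_span_singleton hv0
    -- the quotient coefficients
    set D : ℕ → F := fun r => Nat.rec (c (k+1))
      (fun r Dr => c (k - r) + Dr * a ^ Q ^ (s * (k - r))) r with hD
    have hD0 : D 0 = c (k+1) := rfl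
    have hDsucc : ∀ r, D (r+1) = c (k - r) + D r * a ^ Q ^ (s * (k - r)) := fun r => rfl
    set d : ℕ → F := fun j => if j ≤ k then D (k - j) else 0 with hd
    have hdk : d k = c (k+1) := by rw [hd]; simp [hD0]
    have hrel : ∀ j, 1 ≤ j → j ≤ k+1 → c j = d (j-1) - d j * a ^ Q ^ (s * j) := by
      intro j h1 h2
      rcases eq_or_lt_of_le h2 with rfl | hjk
      · have h0 : d (k+1) = 0 := by simp only [hd]; simp
        simp only [Nat.add_sub_cancel, h0, hdk]
        ring
      · have hjk' : j ≤ k := by omega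
        have e1 : d (j-1) = D ((k-j)+1) := by
          have hle : j - 1 ≤ k := by omega
          have heq : k - (j-1) = (k-j)+1 := by omega
          simp only [hd]
          rw [if_pos hle, heq]
        have e2 : k - (k - j) = j := by omega
        rw [e1, hDsucc, e2]
        have e3 : d j = D (k - j) := by simp only [hd]; rw [if_pos hjk']
        rw [e3]
        ring
    -- key factorization identity
    set r : F := c 0 + d 0 * a with hr
    have hkey : ∀ x : F, SmL (K := K) s c (k+2) x = SmL (K := K) s d (k+1) (g x) + r * x := by
      intro x
      have expand : SmL (K := K) s d (k+1) (g x)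
          = (∑ j ∈ Finset.range (k+2),
              (d (j-1) * x ^ Q ^ (s*j) - d j * a ^ Q ^ (s*j) * x ^ Q ^ (s*j)))
            - d 0 * x := by
        have step1 : ∀ j, d j * (g x) ^ Q ^ (s * j)
            = d j * x ^ Q ^ (s*(j+1)) - d j * a ^ Q ^ (s*j) * x ^ Q ^ (s*j) := by
          intro j
          rw [hg, sch_sub_pow (K := K), mul_pow]
          have : (x ^ Q ^ s) ^ Q ^ (s * j) = x ^ Q ^ (s * (j+1)) := by
            rw [← pow_mul, ← pow_add]
            ring_nf
          rw [this]
          ring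
        have reix : ∑ j ∈ Finset.range (k+1), d j * x ^ Q ^ (s*(j+1))
            = (∑ j ∈ Finset.range (k+2), d (j-1) * x ^ Q ^ (s*j)) - d 0 * x := by
          rw [Finset.sum_range_succ' (fun j => d (j-1) * x ^ Q ^ (s*j)) (k+1)]
          simp only [Nat.add_sub_cancel, Nat.zero_sub, Nat.mul_zero, pow_zero, pow_one]
          ring
        have trunc : ∑ j ∈ Finset.range (k+1), d j * a ^ Q ^ (s*j) * x ^ Q ^ (s*j)
            = ∑ j ∈ Finset.range (k+2), d j * a ^ Q ^ (s*j) * x ^ Q ^ (s*j) := by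
          rw [Finset.sum_range_succ (fun j => d j * a ^ Q ^ (s*j) * x ^ Q ^ (s*j)) (k+1)]
          have h0 : d (k+1) = 0 := by simp only [hd]; simp
          rw [h0]
          ring
        rw [SmL_apply, Finset.sum_congr rfl (fun j _ => step1 j), Finset.sum_sub_distrib,
          reix, trunc, Finset.sum_sub_distrib]
        ring
      rw [expand, SmL_apply]
      have final : ∑ j ∈ Finset.range (k+2), c j * x ^ Q ^ (s*j)
          - (∑ j ∈ Finset.range (k+2),
              (d (j-1) * x ^ Q ^ (s*j) - d j * a ^ Q ^ (s*j) * x ^ Q ^ (s*j))) = r * x - d 0 * x := by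
        rw [← Finset.sum_sub_distrib]
        rw [Finset.sum_eq_single_of_mem 0 (Finset.mem_range.mpr (by omega))]
        · simp only [Nat.mul_zero, pow_zero, pow_one, Nat.zero_sub, hr]
          ring
        · intro j hj hj0
          have h1 : 1 ≤ j := by omega
          have h2 : j ≤ k+1 := by simp only [Finset.mem_range] at hj; omega
          rw [hrel j h1 h2]
          ring
      linear_combination final
    -- evaluate at u to get r = 0
    have hr0 : r = 0 := by
      have := hkey u
      rw [hu, hgu, map_zero, zero_add] at this
      rcases mul_eq_zero.mp this.symm with h | h
      · exact h
      · exact absurd h hu0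
    have hfact : SmL (K := K) s c (k+2) = (SmL (K := K) s d (k+1)) ∘ₗ g := by
      apply LinearMap.ext
      intro x
      rw [LinearMap.comp_apply, hkey x, hr0]
      ring
    -- d has a nonzero coefficient
    have hdne : ∃ j, j ≤ k ∧ d j ≠ 0 := by
      by_contra hcon
      push_neg at hcon
      obtain ⟨j, hj, hcj⟩ := hc
      apply hcj
      rcases Nat.eq_zero_or_pos j with rfl | hj1
      · have h0 : d 0 = 0 := hcon 0 (Nat.zero_le k)
        have h1 : c 0 + d 0 * a = 0 := by rw [← hr]; exact hr0
        rw [h0, zero_mul, add_zero] at h1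
        exact h1
      · rw [hrel j hj1 hj]
        have e1 : d (j-1) = 0 := hcon _ (by omega)
        have e2 : d j = 0 := by
          rcases Nat.lt_or_ge j (k+1) with h | h
          · exact hcon _ (by omega)
          · rw [hd]; simp [show ¬ (j ≤ k) by omega]
        rw [e1, e2]
        ring
    calc finrank K (LinearMap.ker (SmL (K := K) s c (k+2)))
        = finrank K (LinearMap.ker ((SmL (K := K) s d (k+1)) ∘ₗ g)) := by rw [hfact]
      _ ≤ finrank K (LinearMap.ker (SmL (K := K) s d (k+1))) + finrank K (LinearMap.ker g) :=
          sch_ker_comp _ _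
      _ ≤ k + 1 := by
          have := ih d hdne
          omega


private lemma sch_sum_center (m : ℕ) (f : ℕ → F) :
    ∑ j ∈ Finset.range (2*m+1), f j
      = f m + ∑ i ∈ Finset.Icc 1 m, (f (m-i) + f (m+i)) := by
  induction m generalizing f with
  | zero => simp
  | succ m ih =>
    have h1 : 2*(m+1)+1 = (2*m+2)+1 := by ring
    rw [h1, Finset.sum_range_succ' f (2*m+2), Finset.sum_range_succ (fun j => f (j+1)) (2*m+1),
      ih (fun j => f (j+1))]
    have hsplit : Finset.Icc 1 (m+1) = insert (m+1) (Finset.Icc 1 m) := by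
      ext j
      simp only [Finset.mem_Icc, Finset.mem_insert]
      omega
    rw [hsplit, Finset.sum_insert (by simp)]
    have hcg : ∑ i ∈ Finset.Icc 1 m, (f (m-i+1) + f (m+i+1))
        = ∑ i ∈ Finset.Icc 1 m, (f (m+1-i) + f (m+1+i)) := by
      refine Finset.sum_congr rfl fun i hi => ?_
      rw [Finset.mem_Icc] at hi
      have e1 : m - i + 1 = m + 1 - i := by omega
      have e2 : m + i + 1 = m + 1 + i := by omega
      rw [e1, e2]
    have e3 : m + 1 + (m + 1) = 2*m+2 := by ring
    have e4 : m + 1 - (m + 1) = 0 := by omega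
    rw [e3, e4]
    rw [hcg] -- deliberately separate
    ring

private lemma sch_sum_pow (t : ℕ) (T : Finset ℕ) (f : ℕ → F) :
    (∑ i ∈ T, f i) ^ (Fintype.card K) ^ t = ∑ i ∈ T, (f i) ^ (Fintype.card K) ^ t := by
  classical
  induction T using Finset.induction with
  | empty => simp [zero_pow (pow_ne_zero t (Fintype.card_ne_zero (α := K)))]
  | insert _ _ h ih =>
    rw [Finset.sum_insert h, Finset.sum_insert h, sch_add_pow (K := K), ih]

private lemma sch_red {n s : ℕ} (hF : Fintype.card F = (Fintype.card K) ^ n)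
    (t : ℕ) (x : F) :
    x ^ (Fintype.card K) ^ (s*(n+t)) = x ^ (Fintype.card K) ^ (s*t) := by
  have h1 : (Fintype.card K) ^ (s*(n+t)) = ((Fintype.card K)^n)^s * (Fintype.card K)^(s*t) := by
    rw [← pow_mul, ← pow_add]
    ring_nf
  rw [h1, pow_mul, ← hF, FiniteField.pow_card_pow]

/-- Coefficients after applying Frobenius power `Q^(s m)`. -/
def schC (n s m : ℕ) (b : ℕ → F) : ℕ → F := fun j =>
  if j < m then (b (m-j) ^ (Fintype.card K) ^ (s*(n-(m-j)))) ^ (Fintype.card K) ^ (s*m)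
  else if j = m then b 0 ^ (Fintype.card K) ^ (s*m)
  else b (j-m) ^ (Fintype.card K) ^ (s*m)

private lemma sch_tau {n s : ℕ} (m : ℕ) (hmn : m ≤ n)
    (hF : Fintype.card F = (Fintype.card K) ^ n) (b : ℕ → F) (x : F) :
    (b 0 * x + ∑ i ∈ Finset.Icc 1 m,
       (b i * x ^ (Fintype.card K) ^ (s*i) + (b i * x) ^ (Fintype.card K) ^ (s*(n-i))))
      ^ (Fintype.card K) ^ (s*m)
    = SmL (K := K) s (schC (K := K) n s m b) (2*m+1) x := by
  set Q := Fintype.card K with hQ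
  have hL : (b 0 * x + ∑ i ∈ Finset.Icc 1 m,
       (b i * x ^ Q ^ (s*i) + (b i * x) ^ Q ^ (s*(n-i)))) ^ Q ^ (s*m)
      = (b 0 * x) ^ Q ^ (s*m) + ∑ i ∈ Finset.Icc 1 m,
       ((b i * x ^ Q ^ (s*i)) ^ Q ^ (s*m) + ((b i * x) ^ Q ^ (s*(n-i))) ^ Q ^ (s*m)) := by
    rw [sch_add_pow (K := K)]
    congr 1
    rw [sch_sum_pow (K := K) (F := F)]
    refine Finset.sum_congr rfl fun i _ => ?_
    exact sch_add_pow (K := K) _ _ _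
  rw [hL, SmL_apply, sch_sum_center]
  congr 1
  · have hC : schC (K := K) n s m b m = b 0 ^ Q ^ (s*m) := by simp [schC, hQ]
    rw [mul_pow, hC]
  refine Finset.sum_congr rfl fun i hi => ?_
  rw [Finset.mem_Icc] at hi
  have hA : schC (K := K) n s m b (m-i) = (b i ^ Q ^ (s*(n-i))) ^ Q ^ (s*m) := by
    have hlt : m - i < m := by omega
    have hmi : m - (m - i) = i := by omega
    simp only [schC, if_pos hlt, hmi, hQ]
  have hB : schC (K := K) n s m b (m+i) = b i ^ Q ^ (s*m) := by
    have h1 : ¬ (m + i < m) := by omega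
    have h2 : m + i ≠ m := by omega
    simp only [schC, if_neg h1, if_neg h2, Nat.add_sub_cancel_left, hQ]
  have e1 : (b i * x ^ Q ^ (s*i)) ^ Q ^ (s*m) = b i ^ Q ^ (s*m) * x ^ Q ^ (s*(m+i)) := by
    rw [mul_pow, ← pow_mul, ← pow_add, show s*i + s*m = s*(m+i) by ring]
  have e2 : ((b i * x) ^ Q ^ (s*(n-i))) ^ Q ^ (s*m)
      = (b i ^ Q ^ (s*(n-i))) ^ Q ^ (s*m) * x ^ Q ^ (s*(m-i)) := by
    rw [mul_pow (b i) x, mul_pow]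
    congr 1
    rw [← pow_mul, ← pow_add, show s*(n-i) + s*m = s*((n-i)+m) by ring,
      show (n-i)+m = n+(m-i) by omega, sch_red (K := K) hF]
  rw [e1, e2, hA, hB]
  ring

end Schmidt

/-- Every nonzero element of the Schmidt code `S_{n,d,s}` has rank at least `d` as an
`F_q`-linear endomorphism of `F_{qⁿ}`; hence `S_{n,d,s}` is an `F_q`-linear `d`-code of
size `q^(n(n-d+2)/2)`. -/
theorem stmt_15 (q n d s : ℕ) (hq : IsPrimePow q) (hn : 0 < n)
    (hd1 : 1 ≤ d) (hdn : d ≤ n) (hpar : Even (n - d)) (hs : Nat.gcd s n = 1)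
    (K F : Type) [Field K] [Fintype K] [Field F] [Fintype F] [Algebra K F]
    (hK : Fintype.card K = q) (hF : Fintype.card F = q ^ n) :
    (∀ φ : F →ₗ[K] F,
      (∃ b : ℕ → F, ∀ x : F,
        φ x = b 0 * x + ∑ i ∈ Finset.Icc 1 ((n - d) / 2),
          (b i * x ^ q ^ (s * i) + (b i * x) ^ q ^ (s * (n - i)))) →
      φ ≠ 0 → d ≤ Module.finrank K (LinearMap.range φ)) ∧
    Nat.card {f : F → F | ∃ b : ℕ → F, ∀ x : F,
        f x = b 0 * x + ∑ i ∈ Finset.Icc 1 ((n - d) / 2),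
          (b i * x ^ q ^ (s * i) + (b i * x) ^ q ^ (s * (n - i)))}
      = q ^ (n * (n - d + 2) / 2) := by
  subst hK
  set Q := Fintype.card K with hQ
  have hQ2 : 1 < Q := Fintype.one_lt_card
  set m := (n - d) / 2 with hm
  have h2m : 2 * m = n - d := by
    obtain ⟨r, hr⟩ := hpar
    omega
  have hfr : finrank K F = n := by
    have hc := card_eq_pow_finrank (K := K) (V := F)
    rw [hF] at hc
    exact (Nat.pow_right_injective hQ2 hc).symm
  have hmn : m ≤ n := by omega
  constructor
  · rintro φ ⟨b, hb⟩ hφ0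
    have hbne : ∃ i, i ≤ m ∧ b i ≠ 0 := by
      by_contra hcon
      push_neg at hcon
      apply hφ0
      apply LinearMap.ext
      intro x
      rw [hb x, LinearMap.zero_apply, hcon 0 (Nat.zero_le m), zero_mul, zero_add]
      apply Finset.sum_eq_zero
      intro i hi
      rw [Finset.mem_Icc] at hi
      rw [hcon i hi.2, zero_mul, zero_mul,
        zero_pow (pow_ne_zero _ (Fintype.card_ne_zero (α := K))), add_zero]
    have htau : ∀ x : F,
        (φ x) ^ Q ^ (s*m) = SmL (K := K) s (schC (K := K) n s m b) (2*m+1) x := by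
      intro x
      rw [hb x]
      exact sch_tau (s := s) m hmn hF b x
    have hkereq : LinearMap.ker φ
        = LinearMap.ker (SmL (K := K) s (schC (K := K) n s m b) (2*m+1)) := by
      ext x
      simp only [LinearMap.mem_ker]
      constructor
      · intro h
        rw [← htau x, h]
        exact zero_pow (pow_ne_zero _ (Fintype.card_ne_zero (α := K)))
      · intro h
        have h2 := htau x
        rw [h] at h2
        exact pow_eq_zero_iff (pow_ne_zero _ (Fintype.card_ne_zero (α := K))) |>.mp h2
    have hcne : ∃ j, j ≤ 2*m ∧ schC (K := K) n s m b j ≠ 0 := by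
      obtain ⟨i, him, hbi⟩ := hbne
      rcases Nat.eq_zero_or_pos i with rfl | hi1
      · refine ⟨m, by omega, ?_⟩
        have hv : schC (K := K) n s m b m = b 0 ^ Q ^ (s*m) := by simp [schC, hQ]
        rw [hv]
        exact pow_ne_zero _ hbi
      · refine ⟨m+i, by omega, ?_⟩
        have h1 : ¬ (m+i < m) := by omega
        have h2 : m+i ≠ m := by omega
        have hv : schC (K := K) n s m b (m+i) = b i ^ Q ^ (s*m) := by
          simp only [schC, if_neg h1, if_neg h2, Nat.add_sub_cancel_left, hQ]
        rw [hv]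
        exact pow_ne_zero _ hbi
    have hbound := sch_ker_bound (K := K) hn hs hF (2*m) (schC (K := K) n s m b) hcne
    have hrn := LinearMap.finrank_range_add_finrank_ker φ
    rw [hfr, hkereq] at hrn
    omega
  · set E : (Fin (m+1) → F) → ℕ → F :=
      fun t i => if h : i < m + 1 then t ⟨i, h⟩ else 0 with hE
    set G : (Fin (m+1) → F) → (F → F) := fun t x =>
      E t 0 * x + ∑ i ∈ Finset.Icc 1 m,
        (E t i * x ^ Q ^ (s*i) + (E t i * x) ^ Q ^ (s*(n-i))) with hG
    have hSeq : {f : F → F | ∃ b : ℕ → F, ∀ x : F,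
        f x = b 0 * x + ∑ i ∈ Finset.Icc 1 m,
          (b i * x ^ Q ^ (s * i) + (b i * x) ^ Q ^ (s * (n - i)))} = Set.range G := by
      ext f
      constructor
      · rintro ⟨b, hbf⟩
        refine ⟨fun j => b j.val, ?_⟩
        funext x
        simp only [hG]
        rw [hbf x]
        have hE0 : E (fun j => b j.val) 0 = b 0 := by
          simp only [hE]
          rw [dif_pos (show (0:ℕ) < m+1 by omega)]
        rw [hE0]
        congr 1
        refine Finset.sum_congr rfl fun i hi => ?_
        rw [Finset.mem_Icc] at hi
        have hEi : E (fun j => b j.val) i = b i := by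
          simp only [hE]
          rw [dif_pos (show i < m+1 by omega)]
        rw [hEi]
      · rintro ⟨t, rfl⟩
        exact ⟨E t, fun x => rfl⟩
    have hGinj : Function.Injective G := by
      intro t t' htt
      have hpt : ∀ x : F, SmL (K := K) s (schC (K := K) n s m (E t)) (2*m+1) x
          = SmL (K := K) s (schC (K := K) n s m (E t')) (2*m+1) x := by
        intro x
        rw [← sch_tau (s := s) m hmn hF (E t) x, ← sch_tau (s := s) m hmn hF (E t') x]
        have hx := congrFun htt x
        simp only [hG] at hx
        rw [hx]
      have hdel : ∀ j, j ≤ 2*m →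
          schC (K := K) n s m (E t) j = schC (K := K) n s m (E t') j := by
        by_contra hcon
        push_neg at hcon
        obtain ⟨j, hj, hne⟩ := hcon
        set δ : ℕ → F := fun j =>
          schC (K := K) n s m (E t) j - schC (K := K) n s m (E t') j with hδ
        have hzero : ∀ x : F, SmL (K := K) s δ (2*m+1) x = 0 := by
          intro x
          rw [SmL_apply]
          simp only [hδ, sub_mul]
          rw [Finset.sum_sub_distrib, ← SmL_apply, ← SmL_apply, hpt x, sub_self]
        have hkert : LinearMap.ker (SmL (K := K) s δ (2*m+1)) = ⊤ := by
          rw [Submodule.eq_top_iff']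
          intro x
          rw [LinearMap.mem_ker]
          exact hzero x
        have hle := sch_ker_bound (K := K) hn hs hF (2*m) δ
          ⟨j, hj, by simp only [hδ]; exact sub_ne_zero.mpr hne⟩
        rw [hkert, finrank_top, hfr] at hle
        omega
      have hEeq : ∀ i, i ≤ m → E t i = E t' i := by
        intro i him
        rcases Nat.eq_zero_or_pos i with rfl | hi1
        · have hc := hdel m (by omega)
          have hsi : ∀ tt : Fin (m+1) → F,
              schC (K := K) n s m (E tt) m = (E tt 0) ^ Q ^ (s*m) := fun tt => by simp [schC, hQ]
          rw [hsi t, hsi t'] at hc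
          exact sch_pow_inj (K := K) (s*m) hc
        · have hc := hdel (m+i) (by omega)
          have h1 : ¬ (m+i < m) := by omega
          have h2 : m+i ≠ m := by omega
          have hsi : ∀ tt : Fin (m+1) → F,
              schC (K := K) n s m (E tt) (m+i) = (E tt i) ^ Q ^ (s*m) := fun tt => by
            simp only [schC, if_neg h1, if_neg h2, Nat.add_sub_cancel_left, hQ]
          rw [hsi t, hsi t'] at hc
          exact sch_pow_inj (K := K) (s*m) hc
      funext j
      have hj := hEeq j.val (by omega)
      simp only [hE] at hj
      rw [dif_pos j.isLt, dif_pos j.isLt] at hj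
      simpa using hj
    rw [hSeq, Nat.card_congr (Equiv.ofInjective G hGinj).symm, Nat.card_eq_fintype_card,
      Fintype.card_fun, Fintype.card_fin, hF, ← pow_mul]
    congr 1
    rw [show n - d + 2 = 2*(m+1) by omega, show n*(2*(m+1)) = 2*(n*(m+1)) by ring]
    rw [Nat.mul_div_cancel_left _ (by norm_num : (0:ℕ) < 2)]
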